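/- (Clifford theory, linkage) Let A be a complex algebra, Γ a finite group acting on A by automorphisms ψ_γ, and (π, V_π), (ρ, V_ρ) irreducible A-modules of countable dimension. If Ind_A^{Γ⋉A} V_π and Ind_A^{Γ⋉A} V_ρ have a common irreducible Γ⋉A-summand, then there exists γ ∈ Γ such that π∘ψ_γ^{-1} ≅ ρ, and the induced modules Ind_A^{Γ⋉A} V_π and Ind_A^{Γ⋉A} V_ρ are isomorphic as Γ⋉A-modules. -/

import Mathlib

universe u
set_option linter.unusedSectionVars false
set_option maxHeartbeats 1000000

section Aux
variable {A A' : Type u} [Ring A] [Ring A'] [Algebra ℂ A] [Algebra ℂ A']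
  {Γ : Type u} [Group Γ] [Fintype Γ]
  (ψ : Γ →* RingAut A) (ι : A →ₐ[ℂ] A') (g : Γ →* A'ˣ)

lemma aux_iota_g (hrel : ∀ (γ : Γ) (a : A), (g γ : A') * ι a = ι (ψ γ a) * (g γ : A'))
    (γ : Γ) (a : A) : ι a * (g γ : A') = (g γ : A') * ι (ψ γ⁻¹ a) := by
  rw [hrel γ (ψ γ⁻¹ a), map_inv]
  congr 1
  exact (congrArg ι ((ψ γ).apply_symm_apply a)).symm

variable {V I : Type u} [AddCommGroup V] [Module A V] [AddCommGroup I] [Module A' I]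

lemma aux_smul_iota (emb : V →+ I) (hemb : ∀ (a : A) (v : V), emb (a • v) = ι a • emb v)
    (hrel : ∀ (γ : Γ) (a : A), (g γ : A') * ι a = ι (ψ γ a) * (g γ : A'))
    (a : A) (c : Γ → V) :
    ι a • (∑ γ : Γ, (g γ : A') • emb (c γ)) =
      ∑ γ : Γ, (g γ : A') • emb ((ψ γ⁻¹ a) • c γ) := by
  rw [Finset.smul_sum]
  refine Finset.sum_congr rfl fun γ _ => ?_
  rw [smul_smul, aux_iota_g ψ ι g hrel, ← smul_smul, hemb]

lemma aux_smul_g (emb : V →+ I) (δ : Γ) (c : Γ → V) :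
    (g δ : A') • (∑ γ : Γ, (g γ : A') • emb (c γ)) =
      ∑ γ : Γ, (g γ : A') • emb (c (δ⁻¹ * γ)) := by
  rw [Finset.smul_sum]
  refine Fintype.sum_equiv (Equiv.mulLeft δ) _ _ fun γ => ?_
  simp [smul_smul, ← Units.val_mul, ← map_mul]

variable (emb : V →+ I)
  (hI : ∀ x : I, ∃! c : Γ → V, x = ∑ γ : Γ, (g γ : A') • emb (c γ))

noncomputable def auxD (x : I) : Γ → V := (hI x).choose

lemma auxD_spec (x : I) : x = ∑ γ : Γ, (g γ : A') • emb (auxD g emb hI x γ) :=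
  (hI x).choose_spec.1

lemma auxD_unique {x : I} (c : Γ → V) (h : x = ∑ γ : Γ, (g γ : A') • emb (c γ)) :
    auxD g emb hI x = c :=
  ((hI x).choose_spec.2 c h).symm

lemma auxD_sum (c : Γ → V) :
    auxD g emb hI (∑ γ : Γ, (g γ : A') • emb (c γ)) = c :=
  auxD_unique g emb hI c rfl

lemma auxD_add (x y : I) :
    auxD g emb hI (x + y) = fun γ => auxD g emb hI x γ + auxD g emb hI y γ := by
  refine auxD_unique g emb hI _ ?_
  conv_lhs => rw [auxD_spec g emb hI x, auxD_spec g emb hI y]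
  rw [← Finset.sum_add_distrib]
  refine Finset.sum_congr rfl fun γ _ => ?_
  rw [map_add, smul_add]

lemma auxD_iota (hemb : ∀ (a : A) (v : V), emb (a • v) = ι a • emb v)
    (hrel : ∀ (γ : Γ) (a : A), (g γ : A') * ι a = ι (ψ γ a) * (g γ : A'))
    (a : A) (x : I) :
    auxD g emb hI (ι a • x) = fun γ => (ψ γ⁻¹ a) • auxD g emb hI x γ := by
  refine auxD_unique g emb hI _ ?_
  conv_lhs => rw [auxD_spec g emb hI x]
  exact aux_smul_iota ψ ι g emb hemb hrel a _

lemma auxD_g (δ : Γ) (x : I) :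
    auxD g emb hI ((g δ : A') • x) = fun γ => auxD g emb hI x (δ⁻¹ * γ) := by
  refine auxD_unique g emb hI _ ?_
  conv_lhs => rw [auxD_spec g emb hI x]
  exact aux_smul_g g emb δ _

lemma auxD_ne_zero {x : I} (hx : x ≠ 0) : ∃ γ, auxD g emb hI x γ ≠ 0 := by
  by_contra h
  push_neg at h
  apply hx
  rw [auxD_spec g emb hI x]
  simp [h]

end Aux

theorem stmt12
    (A A' : Type u) [Ring A] [Ring A'] [Algebra ℂ A] [Algebra ℂ A']
    (Γ : Type u) [Group Γ] [Fintype Γ]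
    (ψ : Γ →* RingAut A) (ι : A →ₐ[ℂ] A') (g : Γ →* A'ˣ)
    (hrel : ∀ (γ : Γ) (a : A), (g γ : A') * ι a = ι (ψ γ a) * (g γ : A'))
    (hbasis : ∀ x : A', ∃! c : Γ → A, x = ∑ γ : Γ, ι (c γ) * (g γ : A'))
    -- two irreducible A-modules of countable dimension
    (Vπ Vρ : Type u) [AddCommGroup Vπ] [Module A Vπ] [AddCommGroup Vρ] [Module A Vρ]
    [Module ℂ Vπ] [IsScalarTower ℂ A Vπ] [Module ℂ Vρ] [IsScalarTower ℂ A Vρ]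
    (hVπ : IsSimpleModule A Vπ) (hVρ : IsSimpleModule A Vρ)
    (hcountπ : ∃ sπ : Set Vπ, sπ.Countable ∧ Submodule.span ℂ sπ = ⊤)
    (hcountρ : ∃ sρ : Set Vρ, sρ.Countable ∧ Submodule.span ℂ sρ = ⊤)
    -- the induced modules, axiomatized
    (Iπ : Type u) [AddCommGroup Iπ] [Module A' Iπ] (embπ : Vπ →+ Iπ)
    (hembπ : ∀ (a : A) (v : Vπ), embπ (a • v) = ι a • embπ v)
    (hIπ : ∀ x : Iπ, ∃! c : Γ → Vπ, x = ∑ γ : Γ, (g γ : A') • embπ (c γ))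
    (Iρ : Type u) [AddCommGroup Iρ] [Module A' Iρ] (embρ : Vρ →+ Iρ)
    (hembρ : ∀ (a : A) (v : Vρ), embρ (a • v) = ι a • embρ v)
    (hIρ : ∀ x : Iρ, ∃! c : Γ → Vρ, x = ∑ γ : Γ, (g γ : A') • embρ (c γ))
    -- common irreducible direct summand
    (hcommon : ∃ (P P' : Submodule A' Iπ) (Q Q' : Submodule A' Iρ),
      IsCompl P P' ∧ IsCompl Q Q' ∧ IsSimpleModule A' P ∧ Nonempty (P ≃ₗ[A'] Q)) :
    (∃ (γ : Γ) (f : Vπ ≃+ Vρ), ∀ (a : A) (v : Vπ),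
        f (((ψ γ)⁻¹ a) • v) = a • f v) ∧
    Nonempty (Iπ ≃ₗ[A'] Iρ) := by
  classical
  obtain ⟨P, P', Q, Q', hPP', hQQ', hPs, ⟨e⟩⟩ := hcommon
  set φ : Iπ →ₗ[A'] Iρ :=
    Q.subtype ∘ₗ e.toLinearMap ∘ₗ P.projectionOnto P' hPP' with hφ
  haveI : Nontrivial P := by
    haveI := hPs
    exact IsSimpleModule.nontrivial A' P
  obtain ⟨p, hp⟩ := exists_ne (0 : P)
  have hφp : φ (p : Iπ) ≠ 0 := by
    rw [hφ]
    simp only [LinearMap.comp_apply, Submodule.projectionOnto_apply_left hPP' p,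
      Submodule.coe_subtype, LinearEquiv.coe_coe]
    simp only [ne_eq, Submodule.coe_eq_zero]
    intro h
    exact hp (by simpa [Submodule.projectionOnto_apply_left hPP' p] using e.injective (by simpa using h))
  have hex : ∃ γ, φ ((g γ : A') • embπ (auxD g embπ hIπ (p : Iπ) γ)) ≠ 0 := by
    by_contra h
    push_neg at h
    apply hφp
    conv_lhs => rw [auxD_spec g embπ hIπ (p : Iπ)]
    rw [map_sum]
    exact Finset.sum_eq_zero fun γ _ => h γ
  obtain ⟨γ1, hγ1⟩ := hex
  have hv0 : φ (embπ (auxD g embπ hIπ (p : Iπ) γ1)) ≠ 0 := by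
    intro h
    exact hγ1 (by rw [map_smul, h, smul_zero])
  set v0 := auxD g embπ hIπ (p : Iπ) γ1 with hv0def
  obtain ⟨γ0, hγ0⟩ := auxD_ne_zero g embρ hIρ hv0
  have Tadd : ∀ v w : Vπ, auxD g embρ hIρ (φ (embπ (v + w))) γ0 =
      auxD g embρ hIρ (φ (embπ v)) γ0 + auxD g embρ hIρ (φ (embπ w)) γ0 := by
    intro v w
    rw [map_add, map_add, auxD_add]
  set T0 : Vπ →+ Vρ := AddMonoidHom.mk' (fun v => auxD g embρ hIρ (φ (embπ v)) γ0) Tadd with hT0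
  have hT0apply : ∀ v, T0 v = auxD g embρ hIρ (φ (embπ v)) γ0 := fun _ => rfl
  have hT : ∀ (a : A) (v : Vπ), T0 (a • v) = (ψ γ0⁻¹ a) • T0 v := by
    intro a v
    rw [hT0apply, hT0apply, hembπ, map_smul,
      auxD_iota ψ ι g embρ hIρ hembρ hrel a (φ (embπ v))]
  have hψinv : ∀ a : A, (ψ γ0⁻¹) ((ψ γ0) a) = a := by
    intro a
    rw [map_inv]
    exact (ψ γ0).symm_apply_apply a
  have hT' : ∀ (a : A) (v : Vπ), T0 ((ψ γ0 a) • v) = a • T0 v := by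
    intro a v
    rw [hT, hψinv]
  have hT0v0 : T0 v0 ≠ 0 := hγ0
  have hinj : Function.Injective T0 := by
    set K : Submodule A Vπ :=
      { carrier := {v | T0 v = 0}
        add_mem' := fun ha hb => by
          simp only [Set.mem_setOf_eq] at *; rw [map_add, ha, hb, add_zero]
        zero_mem' := map_zero T0
        smul_mem' := fun a v hv => by
          simp only [Set.mem_setOf_eq] at *
          rw [hT, hv, smul_zero] } with hK
    have hKbot : K = ⊥ := by
      rcases hVπ.1.2 K with h | h
      · exact h
      · exact absurd (h ▸ Submodule.mem_top : v0 ∈ K) hT0v0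
    rw [injective_iff_map_eq_zero]
    intro v hv
    have hvK : v ∈ K := hv
    rwa [hKbot, Submodule.mem_bot] at hvK
  have hsurj : Function.Surjective T0 := by
    set R : Submodule A Vρ :=
      { carrier := Set.range T0
        add_mem' := by rintro _ _ ⟨v, rfl⟩ ⟨w, rfl⟩; exact ⟨v + w, map_add _ _ _⟩
        zero_mem' := ⟨0, map_zero T0⟩
        smul_mem' := by rintro a _ ⟨v, rfl⟩; exact ⟨(ψ γ0 a) • v, hT' a v⟩ } with hR
    have hRtop : R = ⊤ := by
      rcases hVρ.1.2 R with h | h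
      · exfalso
        apply hT0v0
        have hmem : T0 v0 ∈ R := ⟨v0, rfl⟩
        rwa [h, Submodule.mem_bot] at hmem
      · exact h
    intro w
    exact (hRtop ▸ Submodule.mem_top : w ∈ R)
  set c : Vπ ≃+ Vρ := AddEquiv.mk' (Equiv.ofBijective T0 ⟨hinj, hsurj⟩) (map_add T0) with hc
  have hcapply : ∀ v, c v = T0 v := fun _ => rfl
  have hsymmT : ∀ v, c.symm (T0 v) = v := fun v => c.symm_apply_apply v
  have hTsymm : ∀ w, T0 (c.symm w) = w := fun w => c.apply_symm_apply w
  constructor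
  · refine ⟨γ0⁻¹, c, fun a v => ?_⟩
    rw [hcapply, hcapply, map_inv, inv_inv]
    exact hT' a v
  · set F : Iπ → Iρ := fun x => ∑ γ : Γ, (g γ : A') • embρ (T0 (auxD g embπ hIπ x (γ * γ0⁻¹)))
      with hF
    set G : Iρ → Iπ := fun y => ∑ γ : Γ, (g γ : A') • embπ (c.symm (auxD g embρ hIρ y (γ * γ0)))
      with hG
    have hdF : ∀ x, auxD g embρ hIρ (F x) = fun γ => T0 (auxD g embπ hIπ x (γ * γ0⁻¹)) := by
      intro x
      simp only [hF]
      exact auxD_sum g embρ hIρ _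
    have hdG : ∀ y, auxD g embπ hIπ (G y) = fun γ => c.symm (auxD g embρ hIρ y (γ * γ0)) := by
      intro y
      simp only [hG]
      exact auxD_sum g embπ hIπ _
    have hleft : ∀ x, G (F x) = x := by
      intro x
      simp only [hG, hdF x, mul_inv_cancel_right, hsymmT]
      exact (auxD_spec g embπ hIπ x).symm
    have hright : ∀ y, F (G y) = y := by
      intro y
      simp only [hF, hdG y, inv_mul_cancel_right, hTsymm]
      exact (auxD_spec g embρ hIρ y).symm
    have hFadd : ∀ x y, F (x + y) = F x + F y := by
      intro x y
      simp only [hF, auxD_add g embπ hIπ x y]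
      rw [← Finset.sum_add_distrib]
      exact Finset.sum_congr rfl fun γ _ => by rw [map_add, map_add, smul_add]
    have hFiota : ∀ (a : A) (x : Iπ), F (ι a • x) = ι a • F x := by
      intro a x
      simp only [hF, auxD_iota ψ ι g embπ hIπ hembπ hrel a x]
      rw [aux_smul_iota ψ ι g embρ hembρ hrel a
        (fun γ => T0 (auxD g embπ hIπ x (γ * γ0⁻¹)))]
      refine Finset.sum_congr rfl fun γ _ => ?_
      congr 2
      rw [hT]
      congr 1
      calc (ψ γ0⁻¹) ((ψ (γ * γ0⁻¹)⁻¹) a) = (ψ γ0⁻¹ * ψ (γ * γ0⁻¹)⁻¹) a := rfl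
        _ = ψ (γ0⁻¹ * (γ * γ0⁻¹)⁻¹) a := by rw [← map_mul]
        _ = (ψ γ⁻¹) a := by
            congr 2
            group
    have hFg : ∀ (δ : Γ) (x : Iπ), F ((g δ : A') • x) = (g δ : A') • F x := by
      intro δ x
      simp only [hF, auxD_g g embπ hIπ δ x]
      rw [aux_smul_g g embρ δ (fun γ => T0 (auxD g embπ hIπ x (γ * γ0⁻¹)))]
      exact Finset.sum_congr rfl fun γ _ => by rw [← mul_assoc]
    set Fhom : Iπ →+ Iρ := AddMonoidHom.mk' F hFadd with hFhom
    have hFsum : ∀ (f : Γ → Iπ), F (∑ γ : Γ, f γ) = ∑ γ : Γ, F (f γ) := by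
      intro f
      exact map_sum Fhom f Finset.univ
    have hFsmul : ∀ (a' : A') (x : Iπ), F (a' • x) = a' • F x := by
      intro a' x
      obtain ⟨b, hb, -⟩ := hbasis a'
      rw [hb, Finset.sum_smul, Finset.sum_smul, hFsum]
      refine Finset.sum_congr rfl fun γ _ => ?_
      rw [mul_smul, hFiota, hFg, ← mul_smul]
    exact ⟨{ toFun := F, invFun := G, left_inv := hleft, right_inv := hright,
             map_add' := hFadd, map_smul' := hFsmul }⟩
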